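/- (Bayes-risk bounds via power divergences.) Let P be a probability measure on (𝒳, ℬ), let f : 𝒳 → [0,∞) be measurable with ∫_𝒳 f dP = 1, let Λ_H > 0, Λ_A > 0 and χ ∈ (0,1), and set H_χ := ∫_𝒳 f^χ dP (the Hellinger integral of order χ, which equals 1 − χ(1−χ)·D where D is the power divergence of order χ between the measure with P-density f and P). Then (Λ_H^{max{1, χ/(1−χ)}} · Λ_A^{max{1, (1−χ)/χ}} / (Λ_H + Λ_A)^{max{χ/(1−χ), (1−χ)/χ}}) · H_χ^{max{1/χ, 1/(1−χ)}} ≤ ∫_𝒳 min{Λ_H·f, Λ_A} dP ≤ Λ_H^χ · Λ_A^{1−χ} · H_χ. -/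

import Mathlib

open Set MeasureTheory
open scoped ENNReal

/-- Pointwise key estimate: for `0 ≤ a ≤ b`, `a^s * b^(1-s) ≤ a^m * (a+b)^M`. -/
lemma bayes_key_aux {a b s m M : ℝ} (ha : 0 ≤ a) (hb : 0 ≤ b) (hs0 : 0 < s) (hs1 : s < 1)
    (hm0 : 0 < m) (hms : m ≤ s) (hmM : m + M = 1) (hab : a ≤ b) :
    a ^ s * b ^ (1 - s) ≤ a ^ m * (a + b) ^ M := by
  have habn : 0 ≤ a + b := add_nonneg ha hb
  rcases eq_or_lt_of_le ha with h0 | h0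
  · rw [← h0, Real.zero_rpow hs0.ne', Real.zero_rpow hm0.ne', zero_mul, zero_mul]
  · have h1 : a ^ s = a ^ m * a ^ (s - m) := by
      rw [← Real.rpow_add h0]; congr 1; ring
    have eM : (s - m) + (1 - s) = M := by linarith
    have hM0 : M ≠ 0 := by nlinarith
    calc a ^ s * b ^ (1 - s) = a ^ m * (a ^ (s - m) * b ^ (1 - s)) := by rw [h1]; ring
      _ ≤ a ^ m * ((a + b) ^ (s - m) * (a + b) ^ (1 - s)) :=
          mul_le_mul_of_nonneg_left
            (mul_le_mul (Real.rpow_le_rpow ha (le_add_of_nonneg_right hb) (by linarith))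
              (Real.rpow_le_rpow hb (le_add_of_nonneg_left ha) (by linarith))
              (Real.rpow_nonneg hb _) (Real.rpow_nonneg habn _)) (Real.rpow_nonneg ha m)
      _ = a ^ m * (a + b) ^ M := by
          rw [← Real.rpow_add' habn (by rw [eM]; exact hM0), eM]

/-- Bayes-risk bounds via power divergences: let `P` be a
probability measure, `f : 𝒳 → [0,∞)` measurable with `∫ f dP = 1`,
`Λ_H > 0`, `Λ_A > 0`, `χ ∈ (0,1)`, and `H_χ := ∫ f^χ dP` the Hellinger integral
of order `χ`. Then
`(Λ_H^{max{1,χ/(1−χ)}}·Λ_A^{max{1,(1−χ)/χ}}/(Λ_H+Λ_A)^{max{χ/(1−χ),(1−χ)/χ}})·H_χ^{max{1/χ,1/(1−χ)}}`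
`≤ ∫ min{Λ_H·f, Λ_A} dP ≤ Λ_H^χ·Λ_A^{1−χ}·H_χ`. -/
theorem bayes_risk_bounds {𝒳 : Type*} [MeasurableSpace 𝒳]
    (P : Measure 𝒳) [IsProbabilityMeasure P]
    (f : 𝒳 → ℝ) (hf : Measurable f) (hf0 : ∀ x, 0 ≤ f x)
    (hf1 : ∫⁻ x, ENNReal.ofReal (f x) ∂P = 1)
    (ΛH ΛA χ : ℝ) (hΛH : 0 < ΛH) (hΛA : 0 < ΛA) (hχ : χ ∈ Set.Ioo (0:ℝ) 1) :
    (ΛH ^ max (1:ℝ) (χ / (1 - χ)) * ΛA ^ max (1:ℝ) ((1 - χ) / χ)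
        / (ΛH + ΛA) ^ max (χ / (1 - χ)) ((1 - χ) / χ))
      * (∫ x, f x ^ χ ∂P) ^ max (1 / χ) (1 / (1 - χ))
      ≤ ∫ x, min (ΛH * f x) ΛA ∂P
    ∧ ∫ x, min (ΛH * f x) ΛA ∂P ≤ ΛH ^ χ * ΛA ^ (1 - χ) * ∫ x, f x ^ χ ∂P := by
  obtain ⟨hχ0, hχ1⟩ := hχ
  have hχ1' : 0 < 1 - χ := by linarith
  set m : ℝ := min χ (1 - χ) with hmdef
  set M : ℝ := max χ (1 - χ) with hMdef
  have hm0 : 0 < m := lt_min hχ0 hχ1'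
  have hmχ : m ≤ χ := min_le_left _ _
  have hm1χ : m ≤ 1 - χ := min_le_right _ _
  have hmM : m + M = 1 := by rw [hmdef, hMdef, min_add_max]; ring
  have hm1 : m < 1 := by linarith
  have hM0 : 0 < M := by linarith
  -- rewriting the max exponents
  have e1 : max (1:ℝ) (χ / (1 - χ)) = χ / m := by
    rcases le_total χ (1 - χ) with h | h
    · rw [max_eq_left (by rw [div_le_one hχ1']; exact h), hmdef, min_eq_left h,
        div_self hχ0.ne']
    · rw [max_eq_right (by rw [le_div_iff₀ hχ1']; linarith), hmdef, min_eq_right h]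
  have e2 : max (1:ℝ) ((1 - χ) / χ) = (1 - χ) / m := by
    rcases le_total χ (1 - χ) with h | h
    · rw [max_eq_right (by rw [le_div_iff₀ hχ0]; linarith), hmdef, min_eq_left h]
    · rw [max_eq_left (by rw [div_le_one hχ0]; exact h), hmdef, min_eq_right h,
        div_self hχ1'.ne']
  have e3 : max (χ / (1 - χ)) ((1 - χ) / χ) = M / m := by
    rcases le_total χ (1 - χ) with h | h
    · rw [max_eq_right (le_trans ((div_le_one hχ1').2 h) ((le_div_iff₀ hχ0).2 (by linarith))),
        hmdef, hMdef, min_eq_left h, max_eq_right h]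
    · rw [max_eq_left (le_trans ((div_le_one hχ0).2 h) ((le_div_iff₀ hχ1').2 (by linarith))),
        hmdef, hMdef, min_eq_right h, max_eq_left h]
  have e4 : max (1 / χ) (1 / (1 - χ)) = 1 / m := by
    rcases le_total χ (1 - χ) with h | h
    · rw [max_eq_left (one_div_le_one_div_of_le hχ0 h), hmdef, min_eq_left h]
    · rw [max_eq_right (one_div_le_one_div_of_le hχ1' h), hmdef, min_eq_right h]
  rw [e1, e2, e3, e4]
  -- integrability facts
  have hfint : Integrable f P := by
    refine ⟨hf.aestronglyMeasurable, ?_⟩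
    rw [hasFiniteIntegral_iff_norm]
    have h : ∀ x, ENNReal.ofReal ‖f x‖ = ENNReal.ofReal (f x) := fun x => by
      rw [Real.norm_of_nonneg (hf0 x)]
    simp_rw [h, hf1]
    exact ENNReal.one_lt_top
  have hminmeas : Measurable fun x => min (ΛH * f x) ΛA :=
    (hf.const_mul ΛH).min measurable_const
  have hminnn : ∀ x, 0 ≤ min (ΛH * f x) ΛA := fun x =>
    le_min (mul_nonneg hΛH.le (hf0 x)) hΛA.le
  have hmin_int : Integrable (fun x => min (ΛH * f x) ΛA) P := by
    refine Integrable.mono' (integrable_const ΛA) hminmeas.aestronglyMeasurable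
      (Filter.Eventually.of_forall fun x => ?_)
    rw [Real.norm_of_nonneg (hminnn x)]
    exact min_le_right _ _
  have hpownn : ∀ x, 0 ≤ f x ^ χ := fun x => Real.rpow_nonneg (hf0 x) χ
  have hpow_int : Integrable (fun x => f x ^ χ) P := by
    refine Integrable.mono' ((integrable_const (1:ℝ)).add hfint)
      (((Real.continuous_rpow_const hχ0.le).measurable.comp hf).aestronglyMeasurable) (Filter.Eventually.of_forall fun x => ?_)
    rw [Real.norm_of_nonneg (hpownn x)]
    rcases le_total (f x) 1 with h | h
    · have h2 := Real.rpow_le_one (hf0 x) h hχ0.le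
      simpa using le_add_of_le_of_nonneg h2 (hf0 x)
    · have h2 : f x ^ χ ≤ f x ^ (1:ℝ) := Real.rpow_le_rpow_of_exponent_le h hχ1.le
      rw [Real.rpow_one] at h2
      simpa using le_add_of_nonneg_of_le zero_le_one h2
  set L : ℝ := ∫ x, min (ΛH * f x) ΛA ∂P with hLdef
  set H : ℝ := ∫ x, f x ^ χ ∂P with hHdef
  have hLnn : 0 ≤ L := integral_nonneg hminnn
  have hHnn : 0 ≤ H := integral_nonneg hpownn
  -- the upper bound
  have hub : L ≤ ΛH ^ χ * ΛA ^ (1 - χ) * H := by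
    have hpt : ∀ x, min (ΛH * f x) ΛA ≤ ΛH ^ χ * ΛA ^ (1 - χ) * f x ^ χ := by
      intro x
      have h1 : min (ΛH * f x) ΛA = min (ΛH * f x) ΛA ^ χ * min (ΛH * f x) ΛA ^ (1 - χ) := by
        rw [← Real.rpow_add' (hminnn x) (by norm_num)]
        norm_num
      calc min (ΛH * f x) ΛA ≤ (ΛH * f x) ^ χ * ΛA ^ (1 - χ) := by
            rw [h1]
            exact mul_le_mul (Real.rpow_le_rpow (hminnn x) (min_le_left _ _) hχ0.le)
              (Real.rpow_le_rpow (hminnn x) (min_le_right _ _) hχ1'.le)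
              (Real.rpow_nonneg (hminnn x) _) (Real.rpow_nonneg (mul_nonneg hΛH.le (hf0 x)) _)
        _ = ΛH ^ χ * ΛA ^ (1 - χ) * f x ^ χ := by
            rw [Real.mul_rpow hΛH.le (hf0 x)]; ring
    calc L ≤ ∫ x, ΛH ^ χ * ΛA ^ (1 - χ) * f x ^ χ ∂P :=
          integral_mono hmin_int (hpow_int.const_mul _) hpt
      _ = ΛH ^ χ * ΛA ^ (1 - χ) * H := integral_const_mul _ _
  refine ⟨?_, hub⟩
  -- lower bound
  set S : ℝ := ΛH + ΛA with hSdef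
  have hS : 0 < S := by positivity
  have hIf : ∫ x, f x ∂P = 1 := by
    rw [integral_eq_lintegral_of_nonneg_ae (Filter.Eventually.of_forall hf0)
      hf.aestronglyMeasurable, hf1, ENNReal.toReal_one]
  have hsum_int : Integrable (fun x => ΛH * f x + ΛA) P :=
    (hfint.const_mul ΛH).add (integrable_const ΛA)
  have hIsum : ∫ x, (ΛH * f x + ΛA) ∂P = S := by
    rw [integral_add (hfint.const_mul ΛH) (integrable_const ΛA), integral_const_mul, hIf,
      integral_const]
    simp [hSdef]
  have hsumnn : ∀ x, (0:ℝ) ≤ ΛH * f x + ΛA := fun x => add_nonneg (mul_nonneg hΛH.le (hf0 x)) hΛA.le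
  -- key pointwise inequality
  have hkey_pt : ∀ x, (ΛH * f x) ^ χ * ΛA ^ (1 - χ)
      ≤ min (ΛH * f x) ΛA ^ m * (ΛH * f x + ΛA) ^ M := by
    intro x
    set a := ΛH * f x with hadef
    have ha : 0 ≤ a := mul_nonneg hΛH.le (hf0 x)
    rcases le_total a ΛA with h | h
    · rw [min_eq_left h]
      exact bayes_key_aux ha hΛA.le hχ0 hχ1 hm0 hmχ hmM h
    · rw [min_eq_right h]
      have h2 := bayes_key_aux hΛA.le ha hχ1' (by linarith) hm0 hm1χ hmM h
      rw [show (1:ℝ) - (1 - χ) = χ by ring] at h2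
      calc a ^ χ * ΛA ^ (1 - χ) = ΛA ^ (1 - χ) * a ^ χ := by ring
        _ ≤ ΛA ^ m * (ΛA + a) ^ M := h2
        _ = ΛA ^ m * (a + ΛA) ^ M := by rw [add_comm]
  -- Hölder step in ℝ≥0∞
  have hconj : Real.HolderConjugate (1 / m) (1 / M) := by
    rw [Real.holderConjugate_iff]; constructor
    · rw [lt_div_iff₀ hm0]; linarith
    · rw [one_div, one_div, inv_inv, inv_inv]; exact hmM
  set F : 𝒳 → ℝ≥0∞ := fun x => ENNReal.ofReal (min (ΛH * f x) ΛA) with hFdef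
  set G : 𝒳 → ℝ≥0∞ := fun x => ENNReal.ofReal (ΛH * f x + ΛA) with hGdef
  have hFmeas : AEMeasurable (fun x => F x ^ m) P :=
    (hminmeas.ennreal_ofReal.pow_const _).aemeasurable
  have hGmeas : AEMeasurable (fun x => G x ^ M) P :=
    (((hf.const_mul ΛH).add_const ΛA).ennreal_ofReal.pow_const _).aemeasurable
  have holder := ENNReal.lintegral_mul_le_Lp_mul_Lq P hconj hFmeas hGmeas
  have hmm : m * (1 / m) = 1 := by field_simp
  have hMM : M * (1 / M) = 1 := by field_simp
  have hFpow : ∀ x, (F x ^ m) ^ (1 / m) = F x := fun x => by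
    rw [← ENNReal.rpow_mul, hmm, ENNReal.rpow_one]
  have hGpow : ∀ x, (G x ^ M) ^ (1 / M) = G x := fun x => by
    rw [← ENNReal.rpow_mul, hMM, ENNReal.rpow_one]
  simp_rw [Pi.mul_apply, hFpow, hGpow, one_div_one_div] at holder
  -- identify the lintegrals
  have hFint : ∫⁻ x, F x ∂P = ENNReal.ofReal L := by
    rw [hLdef, MeasureTheory.ofReal_integral_eq_lintegral_ofReal hmin_int
      (Filter.Eventually.of_forall hminnn)]
  have hGint : ∫⁻ x, G x ∂P = ENNReal.ofReal S := by
    rw [← hIsum, MeasureTheory.ofReal_integral_eq_lintegral_ofReal hsum_int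
      (Filter.Eventually.of_forall hsumnn)]
  -- LHS of Hölder
  have hfun : (fun x => (ΛH * f x) ^ χ * ΛA ^ (1 - χ))
      = fun x => (ΛH ^ χ * ΛA ^ (1 - χ)) * f x ^ χ := by
    funext x; rw [Real.mul_rpow hΛH.le (hf0 x)]; ring
  have hlhs_int : Integrable (fun x => (ΛH * f x) ^ χ * ΛA ^ (1 - χ)) P := by
    rw [hfun]; exact hpow_int.const_mul _
  have hlhs_val : ∫ x, (ΛH * f x) ^ χ * ΛA ^ (1 - χ) ∂P = ΛH ^ χ * ΛA ^ (1 - χ) * H := by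
    rw [hfun, integral_const_mul]
  have hchain : ENNReal.ofReal (ΛH ^ χ * ΛA ^ (1 - χ) * H)
      ≤ ENNReal.ofReal L ^ m * ENNReal.ofReal S ^ M := by
    calc ENNReal.ofReal (ΛH ^ χ * ΛA ^ (1 - χ) * H)
        = ∫⁻ x, ENNReal.ofReal ((ΛH * f x) ^ χ * ΛA ^ (1 - χ)) ∂P := by
          rw [← hlhs_val, MeasureTheory.ofReal_integral_eq_lintegral_ofReal hlhs_int
            (Filter.Eventually.of_forall fun x =>
              mul_nonneg (Real.rpow_nonneg (mul_nonneg hΛH.le (hf0 x)) _)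
                (Real.rpow_nonneg hΛA.le _))]
      _ ≤ ∫⁻ x, F x ^ m * G x ^ M ∂P := by
          refine lintegral_mono fun x => ?_
          refine le_trans (ENNReal.ofReal_le_ofReal (hkey_pt x)) (le_of_eq ?_)
          rw [ENNReal.ofReal_mul (Real.rpow_nonneg (hminnn x) m),
            ← ENNReal.ofReal_rpow_of_nonneg (hminnn x) hm0.le,
            ← ENNReal.ofReal_rpow_of_nonneg (hsumnn x) hM0.le]
      _ ≤ (∫⁻ x, F x ∂P) ^ m * (∫⁻ x, G x ∂P) ^ M := holder
      _ = ENNReal.ofReal L ^ m * ENNReal.ofReal S ^ M := by rw [hFint, hGint]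
  have hreal : ΛH ^ χ * ΛA ^ (1 - χ) * H ≤ L ^ m * S ^ M := by
    have h2 : ENNReal.ofReal L ^ m * ENNReal.ofReal S ^ M
        = ENNReal.ofReal (L ^ m * S ^ M) := by
      rw [ENNReal.ofReal_rpow_of_nonneg hLnn hm0.le,
        ENNReal.ofReal_rpow_of_nonneg hS.le hM0.le,
        ← ENNReal.ofReal_mul (Real.rpow_nonneg hLnn m)]
    rw [h2] at hchain
    exact (ENNReal.ofReal_le_ofReal_iff (by positivity)).1 hchain
  -- raise to power 1/m and conclude
  have hrpow := Real.rpow_le_rpow (by positivity) hreal (by positivity : (0:ℝ) ≤ 1 / m)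
  have hR : (L ^ m * S ^ M) ^ (1 / m) = L * S ^ (M / m) := by
    rw [Real.mul_rpow (Real.rpow_nonneg hLnn m) (Real.rpow_nonneg hS.le M),
      ← Real.rpow_mul hLnn, ← Real.rpow_mul hS.le, hmm, Real.rpow_one, mul_one_div]
  have hLhs : (ΛH ^ χ * ΛA ^ (1 - χ) * H) ^ (1 / m)
      = ΛH ^ (χ / m) * ΛA ^ ((1 - χ) / m) * H ^ (1 / m) := by
    rw [Real.mul_rpow (mul_nonneg (Real.rpow_nonneg hΛH.le _) (Real.rpow_nonneg hΛA.le _)) hHnn,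
      Real.mul_rpow (Real.rpow_nonneg hΛH.le _) (Real.rpow_nonneg hΛA.le _),
      ← Real.rpow_mul hΛH.le, ← Real.rpow_mul hΛA.le, mul_one_div, mul_one_div]
  rw [hR, hLhs] at hrpow
  rw [div_mul_eq_mul_div, div_le_iff₀ (Real.rpow_pos_of_pos hS _)]
  calc ΛH ^ (χ / m) * ΛA ^ ((1 - χ) / m) * H ^ (1 / m) ≤ L * S ^ (M / m) := hrpow
    _ = L * (ΛH + ΛA) ^ (M / m) := by rw [hSdef]
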